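/- Let 𝔽 be a field and ε, η ≥ 1. For each k, let L_k(λ) denote the k×(k+1) matrix pencil with entry 1 in position (r,r) and −λ in position (r,r+1) and zeros elsewhere (the dual basis of the monomial vector π_k(λ) = (λ^k, …, λ, 1)ᵀ). Let p, q ∈ 𝔽^{ε+1} and r, s ∈ 𝔽^{η+1} be coefficient vectors, and set p(λ) := pᵀ·π_ε(λ), q(λ) := qᵀ·π_ε(λ), r(λ) := rᵀ·π_η(λ), s(λ) := sᵀ·π_η(λ). Then the square matrix pencil ℒ(λ) := [[p·sᵀ + q·rᵀ, L_ε(λ)ᵀ],[L_η(λ), 0]] of size ε+η+1 is a linearization for the scalar polynomial t(λ) := p(λ)·s(λ) + r(λ)·q(λ) (whose zeros are the zeros of the rational function p(λ)/q(λ) + r(λ)/s(λ) when numerators and denominators share no common factors). -/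

import Mathlib

open Polynomial Matrix

namespace PaperLin

variable {F : Type*} [Field F]

/-- A square matrix polynomial is *unimodular* if its determinant is a
nonzero constant of the field. -/
def Unimodular {ι : Type*} [Fintype ι] [DecidableEq ι]
    (E : Matrix ι ι (Polynomial F)) : Prop :=
  ∃ c : F, c ≠ 0 ∧ E.det = Polynomial.C c

/-- `L` is a linearization of `P`: `L` is extended unimodularly equivalent to
`P`, i.e. `E(λ) ⬝ diag(I_r, L(λ)) ⬝ G(λ) = diag(I_s, P(λ))` for some unimodular
`E`, `G` (up to bijections of the index sets). -/
def IsLinearization {ι₁ ι₂ κ : Type*} [Fintype ι₁] [DecidableEq ι₁]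
    [Fintype ι₂] [DecidableEq ι₂] [Fintype κ] [DecidableEq κ]
    (L : Matrix ι₁ ι₂ (Polynomial F)) (P : Matrix κ κ (Polynomial F)) : Prop :=
  ∃ (r s : ℕ)
    (E : Matrix (Fin r ⊕ ι₁) (Fin r ⊕ ι₁) (Polynomial F))
    (G : Matrix (Fin r ⊕ ι₂) (Fin r ⊕ ι₂) (Polynomial F))
    (e₁ : (Fin r ⊕ ι₁) ≃ (Fin s ⊕ κ)) (e₂ : (Fin r ⊕ ι₂) ≃ (Fin s ⊕ κ)),
    Unimodular E ∧ Unimodular G ∧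
    E * (Matrix.fromBlocks 1 0 0 L : Matrix (Fin r ⊕ ι₁) (Fin r ⊕ ι₂) (Polynomial F)) * G =
      Matrix.reindex e₁.symm e₂.symm (Matrix.fromBlocks 1 0 0 P)

noncomputable def Vmat (k : ℕ) : Matrix (Fin (k+1)) (Fin (k+1)) (Polynomial F) :=
  Matrix.of fun i j => if i ≤ j then X ^ ((j : ℕ) - (i : ℕ)) else 0

noncomputable def Lmat (k : ℕ) : Matrix (Fin k) (Fin (k+1)) (Polynomial F) :=
  Matrix.of fun i c => if c = i.castSucc then 1 else if c = i.succ then -X else 0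

noncomputable def Pmat (k : ℕ) : Matrix (Fin k) (Fin (k+1)) (Polynomial F) :=
  Matrix.of fun i c => if c = i.castSucc then 1 else 0

noncomputable def fvec {k : ℕ} (v : Fin (k+1) → F) : Fin (k+1) → Polynomial F :=
  fun i => ∑ j, C (v j) * Vmat k j i

noncomputable def Amat {ke kh : ℕ} (p q : Fin (ke+1) → F) (r s : Fin (kh+1) → F) :
    Matrix (Fin (ke+1)) (Fin (kh+1)) (Polynomial F) :=
  Matrix.of fun i j => C (p i * s j + q i * r j)

noncomputable def Rmat {ke kh : ℕ} (p q : Fin (ke+1) → F) (r s : Fin (kh+1) → F) :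
    Matrix (Fin (ke+1)) (Fin kh) (Polynomial F) :=
  Matrix.of fun k c0 =>
    -(fvec p k * fvec s c0.castSucc + fvec q k * fvec r c0.castSucc)

noncomputable def Smat {ke kh : ℕ} (p q : Fin (ke+1) → F) (r s : Fin (kh+1) → F) :
    Matrix (Fin ke) (Fin (kh+1)) (Polynomial F) :=
  Matrix.of fun j c =>
    if c = Fin.last kh then -(fvec p j.castSucc * fvec s c + fvec q j.castSucc * fvec r c)
    else 0

noncomputable def TmatOf (m n : ℕ) (t : Polynomial F) :
    Matrix (Fin (m+1)) (Fin (n+1)) (Polynomial F) :=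
  Matrix.of fun i c => if i = Fin.last m ∧ c = Fin.last n then t else 0

lemma det_Vmat (k : ℕ) : (Vmat (F := F) k).det = 1 := by
  rw [Matrix.det_of_upperTriangular]
  · simp [Vmat]
  · intro i j h
    exact if_neg (not_le.mpr h)

lemma fvec_last {k : ℕ} (v : Fin (k+1) → F) :
    fvec (F := F) v (Fin.last k) = ∑ j, C (v j) * X ^ (k - (j : ℕ)) := by
  simp [fvec, Vmat, Fin.le_last]

lemma Lmat_mul_Vmat (k : ℕ) : Lmat (F := F) k * Vmat (F := F) k = Pmat k := by
  ext i c
  rw [Matrix.mul_apply]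
  have hne : (i.castSucc : Fin (k+1)) ≠ i.succ := (Fin.castSucc_lt_succ (i := i)).ne
  have hsum : ∀ j : Fin (k+1),
      Lmat (F := F) k i j * Vmat k j c
        = (if j = i.castSucc then Vmat (F := F) k i.castSucc c else 0)
          + (if j = i.succ then -X * Vmat (F := F) k i.succ c else 0) := by
    intro j
    rcases eq_or_ne j i.castSucc with h1 | h1
    · subst h1; simp [Lmat, hne]
    · rcases eq_or_ne j i.succ with h2 | h2
      · subst h2; simp [Lmat, hne, h1]
      · simp [Lmat, h1, h2]
  rw [Finset.sum_congr rfl fun j _ => hsum j, Finset.sum_add_distrib,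
    Finset.sum_ite_eq' Finset.univ i.castSucc, Finset.sum_ite_eq' Finset.univ i.succ]
  simp only [Finset.mem_univ, if_true, Vmat, Pmat, Matrix.of_apply]
  have hc1 : (i.castSucc ≤ c) ↔ (i : ℕ) ≤ (c : ℕ) := by simp [Fin.le_def]
  have hc2 : (i.succ ≤ c) ↔ (i : ℕ) + 1 ≤ (c : ℕ) := by simp [Fin.le_def]
  have hc3 : (c = i.castSucc) ↔ (c : ℕ) = (i : ℕ) := by rw [Fin.ext_iff]; simp
  simp only [hc1, hc2, hc3, Fin.coe_castSucc, Fin.val_succ]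
  rcases lt_trichotomy (c : ℕ) (i : ℕ) with h | h | h
  · rw [if_neg (by omega), if_neg (by omega), if_neg (by omega)]; ring
  · rw [if_pos (by omega), if_neg (by omega), if_pos (by omega), h, Nat.sub_self, pow_zero]
    ring
  · rw [if_pos (by omega), if_pos (by omega), if_neg (by omega)]
    have hd : (c : ℕ) - (i : ℕ) = ((c : ℕ) - ((i : ℕ) + 1)) + 1 := by omega
    rw [hd, pow_succ]; ring

lemma VAV {ke kh : ℕ} (p q : Fin (ke+1) → F) (r s : Fin (kh+1) → F)
    (i : Fin (ke+1)) (c : Fin (kh+1)) :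
    ((Vmat (F := F) ke)ᵀ * Amat p q r s * Vmat (F := F) kh) i c
    = fvec p i * fvec s c + fvec q i * fvec r c := by
  calc ((Vmat (F := F) ke)ᵀ * Amat p q r s * Vmat (F := F) kh) i c
      = ∑ j, ∑ k, ((C (p k) * Vmat ke k i) * (C (s j) * Vmat kh j c)
          + (C (q k) * Vmat ke k i) * (C (r j) * Vmat kh j c)) := by
        rw [Matrix.mul_apply]
        refine Finset.sum_congr rfl fun j _ => ?_
        rw [Matrix.mul_apply, Finset.sum_mul]
        refine Finset.sum_congr rfl fun k _ => ?_
        simp only [transpose_apply, Matrix.of_apply, map_add, _root_.map_mul, Amat]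
        ring
    _ = _ := by
        rw [Finset.sum_comm]
        simp only [Finset.sum_mul_sum, fvec, ← Finset.sum_add_distrib]

lemma RP_apply {ke kh : ℕ} (p q : Fin (ke+1) → F) (r s : Fin (kh+1) → F)
    (i : Fin (ke+1)) (c : Fin (kh+1)) :
    (Rmat p q r s * Pmat (F := F) kh) i c
      = if c = Fin.last kh then 0
        else -(fvec p i * fvec s c + fvec q i * fvec r c) := by
  rw [Matrix.mul_apply]
  simp only [Pmat, Matrix.of_apply, mul_ite, mul_one, mul_zero]
  induction c using Fin.lastCases with
  | last =>
    rw [if_pos rfl]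
    exact Finset.sum_eq_zero fun c0 _ => if_neg (Fin.castSucc_lt_last c0).ne'
  | cast c0 =>
    rw [if_neg (Fin.castSucc_lt_last c0).ne]
    simp only [Fin.castSucc_inj]
    rw [Finset.sum_ite_eq Finset.univ c0]
    simp [Rmat]

lemma PS_apply {ke kh : ℕ} (p q : Fin (ke+1) → F) (r s : Fin (kh+1) → F)
    (i : Fin (ke+1)) (c : Fin (kh+1)) :
    ((Pmat (F := F) ke)ᵀ * Smat p q r s) i c
      = if i = Fin.last ke then 0
        else (if c = Fin.last kh then -(fvec p i * fvec s c + fvec q i * fvec r c) else 0) := by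
  rw [Matrix.mul_apply]
  simp only [Pmat, Matrix.transpose_apply, Matrix.of_apply, ite_mul, one_mul, zero_mul]
  induction i using Fin.lastCases with
  | last =>
    rw [if_pos rfl]
    exact Finset.sum_eq_zero fun j _ => if_neg (Fin.castSucc_lt_last j).ne'
  | cast i0 =>
    rw [if_neg (Fin.castSucc_lt_last i0).ne]
    simp only [Fin.castSucc_inj]
    rw [Finset.sum_ite_eq Finset.univ i0]
    simp [Smat]

lemma key {ke kh : ℕ} (p q : Fin (ke+1) → F) (r s : Fin (kh+1) → F) :
    (Vmat (F := F) ke)ᵀ * Amat p q r s * Vmat (F := F) kh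
      + Rmat p q r s * Pmat (F := F) kh
      + (Pmat (F := F) ke)ᵀ * Smat p q r s
    = TmatOf ke kh
        (fvec p (Fin.last ke) * fvec s (Fin.last kh)
          + fvec q (Fin.last ke) * fvec r (Fin.last kh)) := by
  ext i c
  rw [Matrix.add_apply, Matrix.add_apply, VAV, RP_apply, PS_apply]
  simp only [TmatOf, Matrix.of_apply]
  induction i using Fin.lastCases with
  | last =>
    induction c using Fin.lastCases with
    | last => simp
    | cast c0 =>
      rw [if_neg (Fin.castSucc_lt_last c0).ne, if_pos rfl,
        if_neg (by simp [(Fin.castSucc_lt_last c0).ne] : ¬ _)]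
      ring
  | cast i0 =>
    have hi : i0.castSucc ≠ Fin.last ke := (Fin.castSucc_lt_last i0).ne
    induction c using Fin.lastCases with
    | last =>
      rw [if_pos rfl, if_neg hi, if_pos rfl, if_neg (by simp [hi] : ¬ _)]
      ring
    | cast c0 =>
      rw [if_neg (Fin.castSucc_lt_last c0).ne, if_neg hi,
        if_neg (Fin.castSucc_lt_last c0).ne, if_neg (by simp [hi] : ¬ _)]
      ring

def eqv₁ (m n : ℕ) : (Fin 0 ⊕ (Fin (m+1) ⊕ Fin n)) ≃ (Fin (m+n) ⊕ Fin 1) :=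
  (Equiv.emptySum (Fin 0) _).trans <|
  (Equiv.sumCongr finSumFinEquiv.symm (Equiv.refl (Fin n))).trans <|
  (Equiv.sumAssoc (Fin m) (Fin 1) (Fin n)).trans <|
  (Equiv.sumCongr (Equiv.refl (Fin m)) (Equiv.sumComm (Fin 1) (Fin n))).trans <|
  ((Equiv.sumAssoc (Fin m) (Fin n) (Fin 1)).symm).trans <|
  Equiv.sumCongr finSumFinEquiv (Equiv.refl (Fin 1))

def eqv₂ (m n : ℕ) : (Fin 0 ⊕ (Fin (n+1) ⊕ Fin m)) ≃ (Fin (m+n) ⊕ Fin 1) :=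
  (Equiv.emptySum (Fin 0) _).trans <|
  (Equiv.sumCongr finSumFinEquiv.symm (Equiv.refl (Fin m))).trans <|
  (Equiv.sumComm (Fin n ⊕ Fin 1) (Fin m)).trans <|
  ((Equiv.sumAssoc (Fin m) (Fin n) (Fin 1)).symm).trans <|
  Equiv.sumCongr finSumFinEquiv (Equiv.refl (Fin 1))

lemma last_eq_natAdd (m : ℕ) : Fin.last m = Fin.natAdd m (0 : Fin 1) := by ext; simp

lemma castSucc_eq_castAdd {m : ℕ} (i : Fin m) : i.castSucc = Fin.castAdd 1 i := rfl

lemma eqv₁_castSucc {m n : ℕ} (i : Fin m) :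
    eqv₁ m n (Sum.inr (Sum.inl i.castSucc)) = Sum.inl (Fin.castAdd n i) := by
  simp [eqv₁, castSucc_eq_castAdd]

lemma eqv₁_last {m n : ℕ} :
    eqv₁ m n (Sum.inr (Sum.inl (Fin.last m))) = Sum.inr 0 := by
  simp [eqv₁, last_eq_natAdd]

lemma eqv₁_inr {m n : ℕ} (i : Fin n) :
    eqv₁ m n (Sum.inr (Sum.inr i)) = Sum.inl (Fin.natAdd m i) := by
  simp [eqv₁]

lemma eqv₂_castSucc {m n : ℕ} (c : Fin n) :
    eqv₂ m n (Sum.inr (Sum.inl c.castSucc)) = Sum.inl (Fin.natAdd m c) := by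
  simp [eqv₂, castSucc_eq_castAdd]

lemma eqv₂_last {m n : ℕ} :
    eqv₂ m n (Sum.inr (Sum.inl (Fin.last n))) = Sum.inr 0 := by
  simp [eqv₂, last_eq_natAdd]

lemma eqv₂_inr {m n : ℕ} (j : Fin m) :
    eqv₂ m n (Sum.inr (Sum.inr j)) = Sum.inl (Fin.castAdd n j) := by
  simp [eqv₂]

lemma natAdd_ne {m k : ℕ} {a b : Fin k} (h : a ≠ b) : Fin.natAdd m a ≠ Fin.natAdd m b := by
  intro hh
  exact h (Fin.ext (by have := congrArg Fin.val hh; simpa using this))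

lemma reindex_eq (m n : ℕ) (t : Polynomial F) :
    (fromBlocks (1 : Matrix (Fin 0) (Fin 0) (Polynomial F)) 0 0
      (fromBlocks (TmatOf m n t) (Pmat m)ᵀ (Pmat n) 0))
    = Matrix.reindex (eqv₁ m n).symm (eqv₂ m n).symm
        (fromBlocks (1 : Matrix (Fin (m+n)) (Fin (m+n)) (Polynomial F)) 0 0 !![t]) := by
  ext a b
  rcases a with a | a
  · exact a.elim0
  rcases b with b | b
  · exact b.elim0
  rw [Matrix.reindex_apply, Matrix.submatrix_apply, Equiv.symm_symm, Equiv.symm_symm]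
  rcases a with i | i1
  · induction i using Fin.lastCases with
    | last =>
      rcases b with c | c1
      · induction c using Fin.lastCases with
        | last =>
          rw [eqv₁_last, eqv₂_last]
          simp [TmatOf]
        | cast c0 =>
          rw [eqv₁_last, eqv₂_castSucc]
          simp [TmatOf, (Fin.castSucc_lt_last c0).ne]
      · rw [eqv₁_last, eqv₂_inr]
        simp [Pmat, (Fin.castSucc_lt_last c1).ne']
    | cast i0 =>
      rcases b with c | c1
      · induction c using Fin.lastCases with
        | last =>
          rw [eqv₁_castSucc, eqv₂_last]
          simp [TmatOf, (Fin.castSucc_lt_last i0).ne]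
        | cast c0 =>
          rw [eqv₁_castSucc, eqv₂_castSucc]
          have hne : Fin.castAdd n i0 ≠ Fin.natAdd m c0 := by
            intro hh
            have := congrArg Fin.val hh
            simp at this
            omega
          simp [TmatOf, (Fin.castSucc_lt_last i0).ne, Matrix.one_apply, hne]
      · rw [eqv₁_castSucc, eqv₂_inr]
        rcases eq_or_ne i0 c1 with h | h
        · subst h; simp [Pmat, Matrix.one_apply]
        · simp [Pmat, Matrix.one_apply, h, h.symm]
  · rcases b with c | c1
    · induction c using Fin.lastCases with
      | last =>
        rw [eqv₁_inr, eqv₂_last]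
        simp [Pmat, (Fin.castSucc_lt_last i1).ne']
      | cast c0 =>
        rw [eqv₁_inr, eqv₂_castSucc]
        rcases eq_or_ne c0 i1 with h | h
        · subst h; simp [Pmat, Matrix.one_apply]
        · have hne : Fin.natAdd m i1 ≠ Fin.natAdd m c0 := natAdd_ne (Ne.symm h)
          simp [Pmat, Matrix.one_apply, h, h.symm, hne]
    · rw [eqv₁_inr, eqv₂_inr]
      have hne : Fin.natAdd m i1 ≠ Fin.castAdd n c1 := by
        intro hh
        have := congrArg Fin.val hh
        simp at this
        omega
      simp [Matrix.one_apply, hne]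

lemma pad_mul {ι₁ ι₂ ι₃ : Type*} [Fintype ι₁] [Fintype ι₂] [Fintype ι₃]
    [DecidableEq ι₁] [DecidableEq ι₂] [DecidableEq ι₃]
    (M : Matrix ι₁ ι₂ (Polynomial F)) (N : Matrix ι₂ ι₃ (Polynomial F)) :
    (fromBlocks (1 : Matrix (Fin 0) (Fin 0) (Polynomial F)) 0 0 M)
      * (fromBlocks 1 0 0 N : Matrix (Fin 0 ⊕ ι₂) (Fin 0 ⊕ ι₃) (Polynomial F))
      = fromBlocks 1 0 0 (M * N) := by
  rw [Matrix.fromBlocks_multiply]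
  simp

lemma inner_eq {ke kh : ℕ} (p q : Fin (ke+1) → F) (r s : Fin (kh+1) → F) :
    (fromBlocks (Vmat (F := F) ke)ᵀ (Rmat p q r s) 0 1)
      * (fromBlocks (Amat p q r s) (Lmat ke)ᵀ (Lmat kh) 0)
      * (fromBlocks (Vmat (F := F) kh) 0 (Smat p q r s) 1)
    = fromBlocks
        (TmatOf ke kh
          (fvec p (Fin.last ke) * fvec s (Fin.last kh)
            + fvec q (Fin.last ke) * fvec r (Fin.last kh)))
        (Pmat ke)ᵀ (Pmat kh) 0 := by
  have h1 : Lmat (F := F) kh * Vmat (F := F) kh = Pmat kh := Lmat_mul_Vmat kh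
  have h2 : (Vmat (F := F) ke)ᵀ * (Lmat (F := F) ke)ᵀ = (Pmat ke)ᵀ := by
    rw [← Matrix.transpose_mul, Lmat_mul_Vmat]
  rw [Matrix.fromBlocks_multiply, Matrix.fromBlocks_multiply]
  simp only [Matrix.zero_mul, Matrix.mul_zero, Matrix.one_mul, Matrix.mul_one,
    add_zero, zero_add, Matrix.add_mul]
  rw [Matrix.mul_assoc (Rmat p q r s), h1, h2, key]

/-- Linearization of `t(λ) = p(λ)s(λ) + r(λ)q(λ)` (the numerator of the sum of
two rational functions), all polynomials being given in the monomial basis. -/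
theorem statement9 (ε η : ℕ) (hε : 1 ≤ ε) (hη : 1 ≤ η)
    (p q : Fin (ε + 1) → F) (r s : Fin (η + 1) → F) :
    let Lε : Matrix (Fin ε) (Fin (ε + 1)) (Polynomial F) :=
      Matrix.of fun i c =>
        if c = i.castSucc then 1 else if c = i.succ then -Polynomial.X else 0
    let Lη : Matrix (Fin η) (Fin (η + 1)) (Polynomial F) :=
      Matrix.of fun i c =>
        if c = i.castSucc then 1 else if c = i.succ then -Polynomial.X else 0
    let pP : Polynomial F := ∑ i, Polynomial.C (p i) * Polynomial.X ^ (ε - (i : ℕ))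
    let qP : Polynomial F := ∑ i, Polynomial.C (q i) * Polynomial.X ^ (ε - (i : ℕ))
    let rP : Polynomial F := ∑ i, Polynomial.C (r i) * Polynomial.X ^ (η - (i : ℕ))
    let sP : Polynomial F := ∑ i, Polynomial.C (s i) * Polynomial.X ^ (η - (i : ℕ))
    IsLinearization
      (Matrix.fromBlocks
        (Matrix.of fun (i : Fin (ε + 1)) (j : Fin (η + 1)) =>
          (Polynomial.C (p i * s j + q i * r j) : Polynomial F))
        Lεᵀ Lη 0)
      !![pP * sP + rP * qP] := by
  intro Lε Lη pP qP rP sP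
  refine ⟨0, ε + η,
    fromBlocks 1 0 0 (fromBlocks (Vmat (F := F) ε)ᵀ (Rmat p q r s) 0 1),
    fromBlocks 1 0 0 (fromBlocks (Vmat (F := F) η) 0 (Smat p q r s) 1),
    eqv₁ ε η, eqv₂ ε η, ?_, ?_, ?_⟩
  · refine ⟨1, one_ne_zero, ?_⟩
    rw [Matrix.det_fromBlocks_zero₂₁, Matrix.det_fromBlocks_zero₂₁,
      Matrix.det_transpose, det_Vmat, Matrix.det_one, Matrix.det_one, Polynomial.C_1]
    ring
  · refine ⟨1, one_ne_zero, ?_⟩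
    rw [Matrix.det_fromBlocks_zero₂₁, Matrix.det_fromBlocks_zero₁₂,
      det_Vmat, Matrix.det_one, Matrix.det_one, Polynomial.C_1]
    ring
  · have hL : (Matrix.fromBlocks
        (Matrix.of fun (i : Fin (ε + 1)) (j : Fin (η + 1)) =>
          (Polynomial.C (p i * s j + q i * r j) : Polynomial F))
        Lεᵀ Lη 0) = fromBlocks (Amat p q r s) (Lmat ε)ᵀ (Lmat η) 0 := rfl
    rw [hL, pad_mul, pad_mul, inner_eq]
    have hfp : fvec (F := F) p (Fin.last ε) = pP := fvec_last p
    have hfq : fvec (F := F) q (Fin.last ε) = qP := fvec_last q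
    have hfr : fvec (F := F) r (Fin.last η) = rP := fvec_last r
    have hfs : fvec (F := F) s (Fin.last η) = sP := fvec_last s
    have ht : fvec (F := F) p (Fin.last ε) * fvec s (Fin.last η)
        + fvec q (Fin.last ε) * fvec r (Fin.last η) = pP * sP + rP * qP := by
      rw [hfp, hfq, hfr, hfs]; ring
    rw [ht]
    exact reindex_eq ε η _

end PaperLin
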